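/- For all integers n ≥ k ≥ 2, the complete 4-partite graph K_{n,n,n,n} contains a spanning subgraph with 4n² + (k−1)n edges that contains no k pairwise vertex-disjoint triangles. -/

import Mathlib

/-- `G` contains `k` pairwise vertex-disjoint triangles (a copy of `kK₃`). -/
def HasKDisjointTriangles {V : Type*} (G : SimpleGraph V) (k : ℕ) : Prop :=
  ∃ t : Fin k → Finset V,
    (∀ i, (t i).card = 3 ∧ ((t i : Set V)).Pairwise G.Adj) ∧
    Pairwise (Function.onFun Disjoint t)

abbrev V4 (n : ℕ) := Σ _ : Fin 4, Fin n

def myH (n m : ℕ) : SimpleGraph (V4 n) where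
  Adj x y := (¬ (x.1.val < 2 ↔ y.1.val < 2)) ∨
    (x.1 = 0 ∧ y.1 = 1 ∧ x.2.val < m) ∨ (y.1 = 0 ∧ x.1 = 1 ∧ y.2.val < m)
  symm := by constructor; intro x y h; tauto
  loopless := by
    constructor; intro x h
    rcases h with h | ⟨h0, h1, _⟩ | ⟨h0, h1, _⟩
    · exact h Iff.rfl
    · rw [h0] at h1; exact absurd h1 (by decide)
    · rw [h0] at h1; exact absurd h1 (by decide)

instance (n m : ℕ) : DecidableRel (myH n m).Adj := fun x y => by
  unfold myH; exact inferInstanceAs (Decidable (_ ∨ _))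

lemma card_filter_lt (n m : ℕ) (h : m ≤ n) :
    ((Finset.univ : Finset (Fin n)).filter fun a => a.val < m).card = m := by
  have him : (((Finset.univ : Finset (Fin n)).filter fun a => a.val < m).image Fin.val)
      = Finset.range m := by
    ext x
    simp only [Finset.mem_image, Finset.mem_filter, Finset.mem_univ, true_and,
      Finset.mem_range]
    constructor
    · rintro ⟨a, ha, rfl⟩; exact ha
    · intro hx; exact ⟨⟨x, lt_of_lt_of_le hx h⟩, hx, rfl⟩
  calc ((Finset.univ : Finset (Fin n)).filter fun a => a.val < m).card
      = (((Finset.univ : Finset (Fin n)).filter fun a => a.val < m).image Fin.val).card :=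
        (Finset.card_image_of_injective _ Fin.val_injective).symm
    _ = m := by rw [him, Finset.card_range]

lemma myH_edgecount (n m : ℕ) (h : m ≤ n) :
    (myH n m).edgeFinset.card = 4 * n ^ 2 + m * n := by
  have hs := (myH n m).sum_degrees_eq_twice_card_edges
  have hdeg : ∑ v, (myH n m).degree v = 8 * n ^ 2 + 2 * (m * n) := by
    have hd : ∀ v, (myH n m).degree v =
        ∑ j : Fin 4, ∑ b : Fin n, if (myH n m).Adj v ⟨j, b⟩ then 1 else 0 := by
      intro v
      rw [SimpleGraph.degree, SimpleGraph.neighborFinset_eq_filter,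
        Finset.card_filter, ← Finset.univ_sigma_univ, Finset.sum_sigma]
    calc ∑ v, (myH n m).degree v
        = ∑ i : Fin 4, ∑ a : Fin n, ∑ j : Fin 4, ∑ b : Fin n,
            if (myH n m).Adj ⟨i, a⟩ ⟨j, b⟩ then 1 else 0 := by
          rw [← Finset.univ_sigma_univ, Finset.sum_sigma]
          exact Finset.sum_congr rfl fun i _ => Finset.sum_congr rfl fun a _ => hd ⟨i, a⟩
      _ = 8 * n ^ 2 + 2 * (m * n) := by
          have hm := card_filter_lt n m h
          simp only [Fin.sum_univ_four, myH, SimpleGraph.mk]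
          simp only [Fin.ext_iff, show ((0:Fin 4):ℕ)=0 from rfl, show ((1:Fin 4):ℕ)=1 from rfl,
            show ((2:Fin 4):ℕ)=2 from rfl, show ((3:Fin 4):ℕ)=3 from rfl]
          norm_num
          simp only [Finset.sum_add_distrib, Finset.sum_ite, Finset.sum_const,
            Finset.card_univ, Fintype.card_fin, smul_eq_mul, mul_zero, mul_one, hm,
            Finset.sum_const_zero, add_zero]
          ring
  omega

lemma triangle_special (n m : ℕ) (S : Finset (V4 n)) (hc : S.card = 3)
    (hadj : ((S : Set (V4 n))).Pairwise (myH n m).Adj) :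
    ∃ v ∈ S, v.1 = 0 ∧ v.2.val < m := by
  have key : ∀ u v : V4 n, (myH n m).Adj u v → ((u.1.val < 2) ↔ (v.1.val < 2)) →
      (u.1 = 0 ∧ u.2.val < m) ∨ (v.1 = 0 ∧ v.2.val < m) := by
    intro u v huv hside
    rcases huv with hne | ⟨h0, _, hm'⟩ | ⟨h0, _, hm'⟩
    · exact absurd hside hne
    · exact Or.inl ⟨h0, hm'⟩
    · exact Or.inr ⟨h0, hm'⟩
  obtain ⟨x, y, z, hxy, hxz, hyz, rfl⟩ := Finset.card_eq_three.mp hc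
  have hx : x ∈ ({x, y, z} : Finset (V4 n)) := by simp
  have hy : y ∈ ({x, y, z} : Finset (V4 n)) := by simp
  have hz : z ∈ ({x, y, z} : Finset (V4 n)) := by simp
  have axy : (myH n m).Adj x y := hadj (by simp) (by simp) hxy
  have axz : (myH n m).Adj x z := hadj (by simp) (by simp) hxz
  have ayz : (myH n m).Adj y z := hadj (by simp) (by simp) hyz
  by_cases h1 : (x.1.val < 2) ↔ (y.1.val < 2)
  · rcases key x y axy h1 with ⟨h, h'⟩ | ⟨h, h'⟩
    exacts [⟨x, hx, h, h'⟩, ⟨y, hy, h, h'⟩]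
  · by_cases h2 : (x.1.val < 2) ↔ (z.1.val < 2)
    · rcases key x z axz h2 with ⟨h, h'⟩ | ⟨h, h'⟩
      exacts [⟨x, hx, h, h'⟩, ⟨z, hz, h, h'⟩]
    · have h3 : (y.1.val < 2) ↔ (z.1.val < 2) := by tauto
      rcases key y z ayz h3 with ⟨h, h'⟩ | ⟨h, h'⟩
      exacts [⟨y, hy, h, h'⟩, ⟨z, hz, h, h'⟩]

lemma myH_no_triangles (n m k : ℕ) (hmk : m < k) :
    ¬ HasKDisjointTriangles (myH n m) k := by
  rintro ⟨t, htri, hdisj⟩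
  have hch : ∀ i : Fin k, ∃ v ∈ t i, v.1 = 0 ∧ v.2.val < m := fun i =>
    triangle_special n m (t i) (htri i).1 (htri i).2
  choose v hv h0 hm' using hch
  have hkm : k ≤ m := by
    have : Function.Injective (fun i : Fin k => (⟨(v i).2.val, hm' i⟩ : Fin m)) := by
      intro i j hij
      by_contra hne
      have hvij : v i = v j := by
        have h2 := congrArg Fin.val hij
        simp only at h2
        have h2' : (v i).2 = (v j).2 := Fin.val_injective h2
        exact Sigma.ext ((h0 i).trans (h0 j).symm) (heq_of_eq h2')
      have hd := hdisj hne
      exact (Finset.disjoint_left.mp hd (hv i)) (hvij ▸ hv j)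
    simpa using Fintype.card_le_of_injective _ this
  omega


/-- For all integers `n ≥ k ≥ 2`, the complete 4-partite graph `K_{n,n,n,n}` contains a
spanning subgraph with `4n² + (k-1)n` edges having no `k` pairwise vertex-disjoint
triangles; hence `ex(K_{n,n,n,n}, kK₃) ≥ 4n² + (k-1)n`. -/
theorem turan_K4partite_lower_bound (n k : ℕ) (hk : 2 ≤ k) (hkn : k ≤ n) :
    ∃ H : SimpleGraph (Σ _ : Fin 4, Fin n),
      H ≤ SimpleGraph.completeMultipartiteGraph (fun _ : Fin 4 => Fin n) ∧
      H.edgeSet.ncard = 4 * n ^ 2 + (k - 1) * n ∧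
      ¬ HasKDisjointTriangles H k := by
  refine ⟨myH n (k - 1), ?_, ?_, myH_no_triangles n (k - 1) k (by omega)⟩
  · intro x y hxy
    show x.1 ≠ y.1
    rcases hxy with hne | ⟨h0, h1, _⟩ | ⟨h0, h1, _⟩
    · intro he; exact hne (by rw [he])
    · rw [h0, h1]; decide
    · rw [h0, h1]; decide
  · rw [← SimpleGraph.coe_edgeFinset, Set.ncard_coe_finset]
    exact myH_edgecount n (k - 1) (by omega)
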